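/- Let A be an n×n matrix over ℍ with n ≥ 2. For every j ∈ {1,…,n}, cdet_j A = Σ_{i=1}^{n} L_{ij}·a_{ij}, where the left ij-th cofactor is L_{ij} = −cdet_i (A_{i.}(a_{j.}))^{jj} for i ≠ j (replace the i-th row of A by the j-th row of A, then delete the j-th row and the j-th column, and take the i-th column determinant with the column indexing inherited from A), and L_{jj} = cdet_k A^{jj}, where k = min({1,…,n}∖{j}) and A^{jj} is the submatrix of A obtained by deleting its j-th row and j-th column. -/

import Mathlib

open Quaternion Matrix Finset

noncomputable section

/-- Ordered product of the entries of `A` along the cycle of `σ` containing `x`,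
starting at `x`:  `a_{x,σx} · a_{σx,σ²x} ⋯ a_{σ^{c-1}x,x}`. -/
def cycProd {n : ℕ} (A : Matrix (Fin n) (Fin n) ℍ[ℝ]) (σ : Equiv.Perm (Fin n))
    (x : Fin n) : ℍ[ℝ] :=
  ((List.range (Function.minimalPeriod (⇑σ) x)).map
    (fun t => A ((⇑σ)^[t] x) ((⇑σ)^[t + 1] x))).prod

/-- `x` is the smallest element of its `σ`-cycle. -/
def isLeaderB {n : ℕ} (σ : Equiv.Perm (Fin n)) (x : Fin n) : Bool :=
  (List.range n).all fun t => decide (x ≤ (⇑σ)^[t] x)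

/-- `x` lies in the `σ`-cycle of `i`. -/
def inCycleB {n : ℕ} (σ : Equiv.Perm (Fin n)) (i x : Fin n) : Bool :=
  (List.range n).any fun t => decide ((⇑σ)^[t] i = x)

/-- The increasing list of the smallest elements of the `σ`-cycles other than
the cycle of `i`. -/
def leaders {n : ℕ} (σ : Equiv.Perm (Fin n)) (i : Fin n) : List (Fin n) :=
  (List.finRange n).filter fun x => isLeaderB σ x && !(inCycleB σ i x)

/-- The `i`-th row determinant of a quaternion matrix: the sum over all
permutations, written in left-ordered cycle notation (the cycle of `i` first,
starting with `i`; every other cycle starting with its smallest element, these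
smallest elements increasing from left to right), of the sign times the ordered
product of the corresponding entries. -/
def rdet {n : ℕ} (A : Matrix (Fin n) (Fin n) ℍ[ℝ]) (i : Fin n) : ℍ[ℝ] :=
  ∑ σ : Equiv.Perm (Fin n),
    ((Equiv.Perm.sign σ : ℤ) : ℍ[ℝ]) *
      (cycProd A σ i * ((leaders σ i).map (cycProd A σ)).prod)

/-- The `j`-th column determinant of a quaternion matrix: the sum over all
permutations, written in right-ordered cycle notation (the cycle of `j` last,
ending with `j`; every other cycle ending with its smallest element, these
smallest elements increasing from right to left), of the sign times the ordered
product of the corresponding entries. -/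
def cdet {n : ℕ} (A : Matrix (Fin n) (Fin n) ℍ[ℝ]) (j : Fin n) : ℍ[ℝ] :=
  ∑ τ : Equiv.Perm (Fin n),
    ((Equiv.Perm.sign τ : ℤ) : ℍ[ℝ]) *
      ((((leaders τ j).reverse).map (cycProd A τ)).prod * cycProd A τ j)

/-- The determinant of a (Hermitian) quaternion matrix: the common value of all
row and column determinants. -/
def Hdet : {m : ℕ} → Matrix (Fin m) (Fin m) ℍ[ℝ] → ℍ[ℝ]
  | 0, _ => 1
  | _ + 1, A => rdet A 0

/-- The principal submatrix of `M` with rows and columns indexed by `β`. -/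
def principalSub {n : ℕ} (M : Matrix (Fin n) (Fin n) ℍ[ℝ]) (β : Finset (Fin n)) :
    Matrix (Fin β.card) (Fin β.card) ℍ[ℝ] :=
  M.submatrix (⇑(β.orderEmbOfFin rfl)) (⇑(β.orderEmbOfFin rfl))

/-- The position of `i` inside the increasing enumeration of the finset `β`. -/
def posIn {n : ℕ} (β : Finset (Fin n)) {i : Fin n} (h : i ∈ β) : Fin β.card :=
  (β.orderIsoOfFin rfl).symm ⟨i, h⟩

/-- `Σ_{β ∈ J_{s,n}{i}} cdet_i (M_β^β)`: the sum, over all subsets `β` of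
cardinality `s` containing `i`, of the column determinants of the principal
submatrix `M_β^β` taken at the position of `i` within `β`. -/
def cdetPM {n : ℕ} (M : Matrix (Fin n) (Fin n) ℍ[ℝ]) (s : ℕ) (i : Fin n) : ℍ[ℝ] :=
  ∑ β ∈ ((Finset.powersetCard s (Finset.univ : Finset (Fin n))).filter
      fun β => i ∈ β).attach,
    cdet (principalSub M β.1) (posIn β.1 (Finset.mem_filter.mp β.2).2)

/-- `Σ_{α ∈ I_{s,n}{j}} rdet_j (M_α^α)`: the sum, over all subsets `α` of
cardinality `s` containing `j`, of the row determinants of the principal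
submatrix `M_α^α` taken at the position of `j` within `α`. -/
def rdetPM {n : ℕ} (M : Matrix (Fin n) (Fin n) ℍ[ℝ]) (s : ℕ) (j : Fin n) : ℍ[ℝ] :=
  ∑ α ∈ ((Finset.powersetCard s (Finset.univ : Finset (Fin n))).filter
      fun α => j ∈ α).attach,
    rdet (principalSub M α.1) (posIn α.1 (Finset.mem_filter.mp α.2).2)

/-- The sum of all principal minors of `M` of order `r`. -/
def minorSum {n : ℕ} (M : Matrix (Fin n) (Fin n) ℍ[ℝ]) (r : ℕ) : ℍ[ℝ] :=
  ∑ β ∈ Finset.powersetCard r (Finset.univ : Finset (Fin n)),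
    Hdet (principalSub M β)

/-- The (column) rank of a quaternion matrix: the dimension of the span of its
columns as a right `ℍ`-vector space. -/
def qrank {m n : ℕ} (A : Matrix (Fin m) (Fin n) ℍ[ℝ]) : ℕ :=
  Module.finrank ℍ[ℝ]ᵐᵒᵖ
    (Submodule.span ℍ[ℝ]ᵐᵒᵖ (Set.range Aᵀ) : Submodule ℍ[ℝ]ᵐᵒᵖ (Fin m → ℍ[ℝ]))

/-- `Ind A = k`: `k` is the smallest nonnegative integer with
`rank A^(k+1) = rank A^k`. -/
def isInd {n : ℕ} (A : Matrix (Fin n) (Fin n) ℍ[ℝ]) (k : ℕ) : Prop :=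
  qrank (A ^ (k + 1)) = qrank (A ^ k) ∧
    ∀ l < k, qrank (A ^ (l + 1)) ≠ qrank (A ^ l)

/-- `X` is a Drazin inverse of `A` (relative to the index `k`). -/
def isDrazin {n : ℕ} (A X : Matrix (Fin n) (Fin n) ℍ[ℝ]) (k : ℕ) : Prop :=
  A ^ (k + 1) * X = A ^ k ∧ X * A * X = X ∧ A * X = X * A

end

-- ===================== auxiliary lemmas =====================

open Equiv Function in
lemma perm_mem_periodicPts {m : ℕ} (σ : Equiv.Perm (Fin m)) (x : Fin m) :
    x ∈ periodicPts ⇑σ := by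
  refine ⟨orderOf σ, orderOf_pos σ, ?_⟩
  show σ^[orderOf σ] x = x
  rw [Equiv.Perm.iterate_eq_pow, pow_orderOf_eq_one]; rfl

open Function in
lemma perm_mp_pos {m : ℕ} (σ : Equiv.Perm (Fin m)) (x : Fin m) :
    0 < minimalPeriod ⇑σ x :=
  minimalPeriod_pos_of_mem_periodicPts (perm_mem_periodicPts σ x)

open Function in
lemma perm_mp_le {m : ℕ} (σ : Equiv.Perm (Fin m)) (x : Fin m) :
    minimalPeriod ⇑σ x ≤ m := by
  have hinj : Function.Injective
      (fun t : Fin (minimalPeriod ⇑σ x) => (⇑σ)^[t.1] x) := by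
    intro a b hab
    exact Fin.ext (iterate_injOn_Iio_minimalPeriod a.2 b.2 hab)
  simpa using Fintype.card_le_of_injective _ hinj

open Function in
lemma isLeaderB_iff {m : ℕ} (σ : Equiv.Perm (Fin m)) (x : Fin m) :
    isLeaderB σ x = true ↔ ∀ t : ℕ, x ≤ (⇑σ)^[t] x := by
  unfold isLeaderB
  simp only [List.all_eq_true, List.mem_range, decide_eq_true_eq]
  constructor
  · intro h t
    rw [← iterate_mod_minimalPeriod_eq]
    exact h _ (lt_of_lt_of_le
      (Nat.mod_lt _ (perm_mp_pos σ x)) (perm_mp_le σ x))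
  · intro h t _
    exact h t

open Function in
lemma inCycleB_iff {m : ℕ} (σ : Equiv.Perm (Fin m)) (i x : Fin m) :
    inCycleB σ i x = true ↔ ∃ t : ℕ, (⇑σ)^[t] i = x := by
  unfold inCycleB
  simp only [List.any_eq_true, List.mem_range, decide_eq_true_eq]
  constructor
  · rintro ⟨t, -, ht⟩; exact ⟨t, ht⟩
  · rintro ⟨t, ht⟩
    refine ⟨t % minimalPeriod ⇑σ i, lt_of_lt_of_le
      (Nat.mod_lt _ (perm_mp_pos σ i)) (perm_mp_le σ i), ?_⟩
    rw [iterate_mod_minimalPeriod_eq]; exact ht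

open Function in
lemma inCycleB_self {m : ℕ} (σ : Equiv.Perm (Fin m)) (i : Fin m) :
    inCycleB σ i i = true := (inCycleB_iff σ i i).2 ⟨0, rfl⟩

open Function in
lemma inCycleB_symm {m : ℕ} {σ : Equiv.Perm (Fin m)} {i x : Fin m}
    (h : inCycleB σ i x = true) : inCycleB σ x i = true := by
  rw [inCycleB_iff] at h ⊢
  obtain ⟨t, rfl⟩ := h
  refine ⟨minimalPeriod ⇑σ i * t - t, ?_⟩
  have h1 : t ≤ minimalPeriod ⇑σ i * t :=
    Nat.le_mul_of_pos_left t (perm_mp_pos σ i)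
  rw [← Function.iterate_add_apply, Nat.sub_add_cancel h1]
  exact (isPeriodicPt_minimalPeriod ⇑σ i).mul_const t


open Function in
lemma mp_conj {M m : ℕ} {τ : Equiv.Perm (Fin M)} {σ : Equiv.Perm (Fin m)}
    {f : Fin m → Fin M} (hf : Function.Injective f) {y : Fin m}
    (hiter : ∀ t : ℕ, (⇑τ)^[t] (f y) = f ((⇑σ)^[t] y)) :
    minimalPeriod ⇑τ (f y) = minimalPeriod ⇑σ y := by
  rw [minimalPeriod_eq_minimalPeriod_iff]
  intro t
  unfold IsPeriodicPt IsFixedPt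
  rw [hiter]
  exact ⟨fun h => hf h, fun h => congrArg f h⟩

open Function in
lemma cycProd_conj {M m : ℕ} {A : Matrix (Fin M) (Fin M) ℍ[ℝ]}
    {B : Matrix (Fin m) (Fin m) ℍ[ℝ]} {τ : Equiv.Perm (Fin M)}
    {σ : Equiv.Perm (Fin m)} {f : Fin m → Fin M} (hf : Function.Injective f)
    {y : Fin m} (hiter : ∀ t : ℕ, (⇑τ)^[t] (f y) = f ((⇑σ)^[t] y))
    (hent : ∀ t : ℕ, B ((⇑σ)^[t] y) ((⇑σ)^[t + 1] y)
      = A (f ((⇑σ)^[t] y)) (f ((⇑σ)^[t + 1] y))) :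
    cycProd A τ (f y) = cycProd B σ y := by
  unfold cycProd
  rw [mp_conj hf hiter]
  congr 1
  refine List.map_congr_left fun t _ => ?_
  rw [hiter, hiter, hent]

open Function in
lemma isLeaderB_conj {n : ℕ} {j : Fin (n + 2)} {τ : Equiv.Perm (Fin (n + 2))}
    {σ : Equiv.Perm (Fin (n + 1))} {y : Fin (n + 1)}
    (hiter : ∀ t : ℕ, (⇑τ)^[t] (j.succAbove y) = j.succAbove ((⇑σ)^[t] y)) :
    isLeaderB τ (j.succAbove y) = isLeaderB σ y := by
  have : (isLeaderB τ (j.succAbove y) = true) ↔ (isLeaderB σ y = true) := by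
    rw [isLeaderB_iff, isLeaderB_iff]
    refine forall_congr' fun t => ?_
    rw [hiter, (Fin.strictMono_succAbove j).le_iff_le]
  rcases Bool.eq_false_or_eq_true (isLeaderB σ y) with h | h <;>
    simp [h] at this ⊢ <;> simp [this]

lemma mem_leaders_iff {m : ℕ} {σ : Equiv.Perm (Fin m)} {i x : Fin m} :
    x ∈ leaders σ i ↔ (isLeaderB σ x = true ∧ ¬ inCycleB σ i x = true) := by
  unfold leaders
  rw [List.mem_filter]
  simp [List.mem_finRange]

lemma leaders_pairwise {m : ℕ} (σ : Equiv.Perm (Fin m)) (i : Fin m) :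
    (leaders σ i).Pairwise (· < ·) :=
  List.Pairwise.sublist List.filter_sublist (List.pairwise_lt_finRange m)

lemma eq_map_of_sorted {m M : ℕ} (f : Fin m → Fin M) (hf : StrictMono f)
    (l1 : List (Fin M)) (l2 : List (Fin m)) (h1 : l1.Pairwise (· < ·))
    (h2 : l2.Pairwise (· < ·))
    (hmem : ∀ x, x ∈ l1 ↔ ∃ y ∈ l2, f y = x) : l1 = l2.map f := by
  have h2' : (l2.map f).Pairwise (· < ·) :=
    List.Pairwise.map f (fun a b hab => hf hab) h2
  refine List.Perm.eq_of_pairwise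
    (fun a b _ _ hab hba => absurd (hab.trans hba) (lt_irrefl _)) h1 h2' ?_
  rw [List.perm_ext_iff_of_nodup h1.nodup h2'.nodup]
  intro x
  rw [hmem, List.mem_map]


/-- The extension of a permutation of `Fin (n+1)` to `Fin (n+2)` fixing `j`. -/
noncomputable def tau0 {n : ℕ} (j : Fin (n + 2)) (σ : Equiv.Perm (Fin (n + 1))) :
    Equiv.Perm (Fin (n + 2)) :=
  σ.viaFintypeEmbedding (Fin.succAboveEmb j)

lemma tau0_apply_f {n : ℕ} (j : Fin (n + 2)) (σ : Equiv.Perm (Fin (n + 1)))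
    (y : Fin (n + 1)) : tau0 j σ (j.succAbove y) = j.succAbove (σ y) :=
  Equiv.Perm.viaFintypeEmbedding_apply_image σ (Fin.succAboveEmb j) y

lemma tau0_apply_j {n : ℕ} (j : Fin (n + 2)) (σ : Equiv.Perm (Fin (n + 1))) :
    tau0 j σ j = j := by
  refine Equiv.Perm.viaFintypeEmbedding_apply_notMem_range σ _ ?_
  rintro ⟨y, hy⟩
  exact Fin.succAbove_ne j y hy

lemma sign_tau0 {n : ℕ} (j : Fin (n + 2)) (σ : Equiv.Perm (Fin (n + 1))) :
    Equiv.Perm.sign (tau0 j σ) = Equiv.Perm.sign σ :=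
  Equiv.Perm.viaFintypeEmbedding_sign σ _

/-- The permutation of `Fin (n+2)` sending `i ↦ j` associated to `σ`. -/
noncomputable def tauE {n : ℕ} (j i : Fin (n + 2))
    (σ : Equiv.Perm (Fin (n + 1))) : Equiv.Perm (Fin (n + 2)) :=
  tau0 j σ * Equiv.swap j i

lemma tauE_apply_j {n : ℕ} (j : Fin (n + 2)) (i' : Fin (n + 1))
    (σ : Equiv.Perm (Fin (n + 1))) :
    tauE j (j.succAbove i') σ j = j.succAbove (σ i') := by
  show tau0 j σ (Equiv.swap j (j.succAbove i') j) = _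
  rw [Equiv.swap_apply_left, tau0_apply_f]

lemma tauE_apply_i {n : ℕ} (j i : Fin (n + 2)) (σ : Equiv.Perm (Fin (n + 1))) :
    tauE j i σ i = j := by
  show tau0 j σ (Equiv.swap j i i) = _
  rw [Equiv.swap_apply_right, tau0_apply_j]

lemma tauE_apply_f {n : ℕ} (j : Fin (n + 2)) (i' : Fin (n + 1))
    (σ : Equiv.Perm (Fin (n + 1))) (y : Fin (n + 1)) (hy : y ≠ i') :
    tauE j (j.succAbove i') σ (j.succAbove y) = j.succAbove (σ y) := by
  show tau0 j σ (Equiv.swap j (j.succAbove i') (j.succAbove y)) = _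
  rw [Equiv.swap_apply_of_ne_of_ne (Fin.succAbove_ne j y)
    (fun h => hy (Fin.succAbove_right_injective h)), tau0_apply_f]

open Function in
lemma iter_diag {n : ℕ} (j : Fin (n + 2)) (σ : Equiv.Perm (Fin (n + 1)))
    (y : Fin (n + 1)) : ∀ t : ℕ,
    (⇑(tau0 j σ))^[t] (j.succAbove y) = j.succAbove ((⇑σ)^[t] y) := by
  intro t
  induction t with
  | zero => rfl
  | succ t ih => rw [iterate_succ_apply', iterate_succ_apply', ih, tau0_apply_f]

open Function in
lemma iter_j_diag {n : ℕ} (j : Fin (n + 2)) (σ : Equiv.Perm (Fin (n + 1))) :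
    ∀ t : ℕ, (⇑(tau0 j σ))^[t] j = j := by
  intro t
  induction t with
  | zero => rfl
  | succ t ih => rw [iterate_succ_apply', ih, tau0_apply_j]

open Function in
lemma mp_j_diag {n : ℕ} (j : Fin (n + 2)) (σ : Equiv.Perm (Fin (n + 1))) :
    minimalPeriod (⇑(tau0 j σ)) j = 1 :=
  minimalPeriod_eq_one_iff_isFixedPt.2 (tau0_apply_j j σ)

open Function in
lemma cycProd_j_diag {n : ℕ} (A : Matrix (Fin (n + 2)) (Fin (n + 2)) ℍ[ℝ])
    (j : Fin (n + 2)) (σ : Equiv.Perm (Fin (n + 1))) :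
    cycProd A (tau0 j σ) j = A j j := by
  unfold cycProd
  rw [mp_j_diag]
  simp [iter_j_diag]

open Function in
lemma iter_off {n : ℕ} (j : Fin (n + 2)) (i' : Fin (n + 1))
    (σ : Equiv.Perm (Fin (n + 1))) (y : Fin (n + 1))
    (hy : ∀ t : ℕ, (⇑σ)^[t] y ≠ i') : ∀ t : ℕ,
    (⇑(tauE j (j.succAbove i') σ))^[t] (j.succAbove y)
      = j.succAbove ((⇑σ)^[t] y) := by
  intro t
  induction t with
  | zero => rfl
  | succ t ih =>
      rw [iterate_succ_apply', iterate_succ_apply', ih,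
        tauE_apply_f j i' σ _ (hy t)]

open Function in
lemma iter_j_off {n : ℕ} (j : Fin (n + 2)) (i' : Fin (n + 1))
    (σ : Equiv.Perm (Fin (n + 1))) :
    ∀ t : ℕ, 1 ≤ t → t ≤ minimalPeriod ⇑σ i' →
    (⇑(tauE j (j.succAbove i') σ))^[t] j = j.succAbove ((⇑σ)^[t] i') := by
  intro t
  induction t with
  | zero => omega
  | succ t ih =>
      intro _ hle
      rcases Nat.eq_zero_or_pos t with rfl | ht
      · exact tauE_apply_j j i' σ
      · have h1 : (⇑σ)^[t] i' ≠ i' := by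
          intro h
          have := (iterate_eq_iterate_iff_of_lt_minimalPeriod
            (lt_of_lt_of_le (Nat.lt_succ_self t) hle)
            (lt_of_le_of_lt (Nat.zero_le _)
              (lt_of_lt_of_le (Nat.lt_succ_self t) hle))).1
            (h.trans (rfl : (⇑σ)^[0] i' = i').symm)
          omega
        rw [iterate_succ_apply', ih ht (le_trans (Nat.le_succ t) hle),
          iterate_succ_apply', tauE_apply_f j i' σ _ h1]


open Function in
lemma mp_j_off {n : ℕ} (j : Fin (n + 2)) (i' : Fin (n + 1))
    (σ : Equiv.Perm (Fin (n + 1))) :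
    minimalPeriod (⇑(tauE j (j.succAbove i') σ)) j
      = minimalPeriod ⇑σ i' + 1 := by
  set p := minimalPeriod ⇑σ i' with hp
  set τ := tauE j (j.succAbove i') σ with hτ
  have hp1 : 1 ≤ p := perm_mp_pos σ i'
  have hper : IsPeriodicPt ⇑τ (p + 1) j := by
    show (⇑τ)^[p + 1] j = j
    rw [iterate_succ_apply', iter_j_off j i' σ p hp1 le_rfl,
      iterate_minimalPeriod]
    exact tauE_apply_i j (j.succAbove i') σ
  have hle : minimalPeriod ⇑τ j ≤ p + 1 :=
    hper.minimalPeriod_le (Nat.succ_pos p)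
  have hge : ¬ minimalPeriod ⇑τ j ≤ p := by
    intro h
    have h0 : 1 ≤ minimalPeriod ⇑τ j := perm_mp_pos τ j
    have := iterate_minimalPeriod (f := ⇑τ) (x := j)
    rw [iter_j_off j i' σ _ h0 h] at this
    exact Fin.succAbove_ne j _ this
  omega

open Function in
lemma tauE_iter_p1 {n : ℕ} (j : Fin (n + 2)) (i' : Fin (n + 1))
    (σ : Equiv.Perm (Fin (n + 1))) :
    (⇑(tauE j (j.succAbove i') σ))^[minimalPeriod ⇑σ i' + 1] j = j := by
  rw [iterate_succ_apply', iter_j_off j i' σ _ (perm_mp_pos σ i') le_rfl,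
    iterate_minimalPeriod]
  exact tauE_apply_i j (j.succAbove i') σ

open Function in
lemma cycProd_j_off {n : ℕ} (A : Matrix (Fin (n + 2)) (Fin (n + 2)) ℍ[ℝ])
    (j : Fin (n + 2)) (i' : Fin (n + 1)) (σ : Equiv.Perm (Fin (n + 1))) :
    cycProd A (tauE j (j.succAbove i') σ) j =
      cycProd ((A.updateRow (j.succAbove i') fun t => A j t).submatrix
        j.succAbove j.succAbove) σ i' * A (j.succAbove i') j := by
  have hp1 : 1 ≤ minimalPeriod ⇑σ i' := perm_mp_pos σ i'
  unfold cycProd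
  rw [mp_j_off, List.range_succ, List.map_append, List.prod_append]
  congr 1
  · congr 1
    refine List.map_congr_left fun t ht => ?_
    rw [List.mem_range] at ht
    rcases Nat.eq_zero_or_pos t with rfl | ht0
    · simp only [iterate_zero_apply, Matrix.submatrix_apply]
      rw [iter_j_off j i' σ 1 le_rfl hp1, iterate_one, Matrix.updateRow_self]
    · have h1 : (⇑σ)^[t] i' ≠ i' := by
        intro h
        have := (iterate_eq_iterate_iff_of_lt_minimalPeriod ht
          (lt_of_le_of_lt (Nat.zero_le _) ht)).1
          (h.trans (rfl : (⇑σ)^[0] i' = i').symm)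
        omega
      rw [iter_j_off j i' σ t ht0 (le_of_lt ht),
        iter_j_off j i' σ (t + 1) (by omega) ht,
        Matrix.submatrix_apply, Matrix.updateRow_ne
          (fun h => h1 (Fin.succAbove_right_injective h))]
  · simp only [List.map_cons, List.map_nil, List.prod_cons, List.prod_nil,
      mul_one]
    rw [iter_j_off j i' σ _ hp1 le_rfl, iterate_minimalPeriod, tauE_iter_p1]

open Function in
lemma not_inCycle_forall {m : ℕ} {σ : Equiv.Perm (Fin m)} {i y : Fin m}
    (h : ¬ inCycleB σ i y = true) : ∀ t : ℕ, (⇑σ)^[t] y ≠ i := by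
  intro t ht
  exact h (inCycleB_symm ((inCycleB_iff σ y i).2 ⟨t, ht⟩))

open Function in
lemma inCycle_j_off {n : ℕ} (j : Fin (n + 2)) (i' : Fin (n + 1))
    (σ : Equiv.Perm (Fin (n + 1))) (x : Fin (n + 2)) :
    inCycleB (tauE j (j.succAbove i') σ) j x = true ↔
      (x = j ∨ ∃ y, j.succAbove y = x ∧ inCycleB σ i' y = true) := by
  have hp1 : 1 ≤ minimalPeriod ⇑σ i' := perm_mp_pos σ i'
  set p := minimalPeriod ⇑σ i' with hp
  rw [inCycleB_iff]
  constructor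
  · rintro ⟨t, rfl⟩
    have hmod : (⇑(tauE j (j.succAbove i') σ))^[t] j
        = (⇑(tauE j (j.succAbove i') σ))^[t % (p + 1)] j := by
      conv_lhs => rw [← iterate_mod_minimalPeriod_eq (n := t)]
      rw [mp_j_off]
    rcases Nat.eq_zero_or_pos (t % (p + 1)) with h0 | h0
    · left
      rw [hmod, h0]
      rfl
    · right
      have hlt : t % (p + 1) ≤ p := by
        have := Nat.mod_lt t (y := p + 1) (by omega); omega
      refine ⟨(⇑σ)^[t % (p + 1)] i', ?_, (inCycleB_iff σ i' _).2 ⟨_, rfl⟩⟩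
      rw [hmod, iter_j_off j i' σ _ h0 hlt]
  · rintro (rfl | ⟨y, rfl, hy⟩)
    · exact ⟨0, rfl⟩
    · rw [inCycleB_iff] at hy
      obtain ⟨t, ht⟩ := hy
      have hmodσ : (⇑σ)^[t % p] i' = y := by
        rw [hp, iterate_mod_minimalPeriod_eq]; exact ht
      rcases Nat.eq_zero_or_pos (t % p) with h0 | h0
      · refine ⟨p, ?_⟩
        rw [iter_j_off j i' σ p hp1 le_rfl]
        rw [h0] at hmodσ
        rw [hp, iterate_minimalPeriod, ← hmodσ]
        rfl
      · refine ⟨t % p, ?_⟩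
        have hlt : t % p ≤ p := le_of_lt (Nat.mod_lt t (by omega))
        rw [iter_j_off j i' σ _ h0 hlt, hmodσ]


open Function in
lemma leaders_diag {n : ℕ} (j : Fin (n + 2)) (σ : Equiv.Perm (Fin (n + 1))) :
    leaders (tau0 j σ) j = (((0 : Fin (n + 1)) :: leaders σ 0).map
      j.succAbove) := by
  have hinC : ∀ x, inCycleB (tau0 j σ) j x = true ↔ x = j := by
    intro x
    rw [inCycleB_iff]
    constructor
    · rintro ⟨t, rfl⟩; exact iter_j_diag j σ t
    · rintro rfl; exact ⟨0, rfl⟩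
  refine eq_map_of_sorted _ (Fin.strictMono_succAbove j) _ _
    (leaders_pairwise _ _) ?_ ?_
  · rw [List.pairwise_cons]
    refine ⟨fun x hx => ?_, leaders_pairwise σ 0⟩
    rw [Fin.pos_iff_ne_zero]
    intro h
    subst h
    exact (mem_leaders_iff.1 hx).2 (inCycleB_self σ 0)
  · intro x
    rw [mem_leaders_iff]
    constructor
    · rintro ⟨hl, hc⟩
      have hxj : x ≠ j := fun h => hc ((hinC x).2 h)
      obtain ⟨y, rfl⟩ := Fin.exists_succAbove_eq hxj
      refine ⟨y, ?_, rfl⟩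
      have hly : isLeaderB σ y = true := by
        rw [← isLeaderB_conj (iter_diag j σ y)]; exact hl
      rcases eq_or_ne y 0 with rfl | hy0
      · exact List.mem_cons_self
      · refine List.mem_cons_of_mem _ (mem_leaders_iff.2 ⟨hly, fun hcy => ?_⟩)
        have := inCycleB_symm hcy
        rw [inCycleB_iff] at this
        obtain ⟨t, ht⟩ := this
        have := (isLeaderB_iff σ y).1 hly t
        rw [ht, Fin.le_zero_iff] at this
        exact hy0 this
    · rintro ⟨y, hy, rfl⟩
      have hly : isLeaderB σ y = true := by
        rcases List.mem_cons.1 hy with rfl | hy'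
        · rw [isLeaderB_iff]; intro t; exact Fin.zero_le _
        · exact (mem_leaders_iff.1 hy').1
      refine ⟨?_, fun hc => Fin.succAbove_ne j y ((hinC _).1 hc)⟩
      rw [isLeaderB_conj (iter_diag j σ y)]; exact hly

open Function in
lemma leaders_off {n : ℕ} (j : Fin (n + 2)) (i' : Fin (n + 1))
    (σ : Equiv.Perm (Fin (n + 1))) :
    leaders (tauE j (j.succAbove i') σ) j = (leaders σ i').map j.succAbove := by
  refine eq_map_of_sorted _ (Fin.strictMono_succAbove j) _ _
    (leaders_pairwise _ _) (leaders_pairwise _ _) ?_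
  intro x
  rw [mem_leaders_iff]
  constructor
  · rintro ⟨hl, hc⟩
    rw [inCycle_j_off] at hc
    push_neg at hc
    obtain ⟨hxj, hc2⟩ := hc
    obtain ⟨y, rfl⟩ := Fin.exists_succAbove_eq hxj
    have hcy : ¬ inCycleB σ i' y = true := hc2 y rfl
    refine ⟨y, mem_leaders_iff.2 ⟨?_, hcy⟩, rfl⟩
    rw [← isLeaderB_conj (iter_off j i' σ y (not_inCycle_forall hcy))]
    exact hl
  · rintro ⟨y, hy, rfl⟩
    obtain ⟨hly, hcy⟩ := mem_leaders_iff.1 hy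
    constructor
    · rw [isLeaderB_conj (iter_off j i' σ y (not_inCycle_forall hcy))]
      exact hly
    · intro hc
      rw [inCycle_j_off] at hc
      rcases hc with h | ⟨y', hy', hcy'⟩
      · exact Fin.succAbove_ne j y h
      · exact hcy (Fin.succAbove_right_injective hy' ▸ hcy')


lemma sign_tauE {n : ℕ} (j i : Fin (n + 2)) (σ : Equiv.Perm (Fin (n + 1)))
    (hij : j ≠ i) :
    Equiv.Perm.sign (tauE j i σ) = - Equiv.Perm.sign σ := by
  unfold tauE
  rw [Equiv.Perm.sign_mul, sign_tau0, Equiv.Perm.sign_swap hij]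
  simp

lemma diag_term {n : ℕ} (A : Matrix (Fin (n + 2)) (Fin (n + 2)) ℍ[ℝ])
    (j : Fin (n + 2)) (σ : Equiv.Perm (Fin (n + 1))) :
    ((Equiv.Perm.sign (tau0 j σ) : ℤ) : ℍ[ℝ]) *
      ((((leaders (tau0 j σ) j).reverse).map (cycProd A (tau0 j σ))).prod *
        cycProd A (tau0 j σ) j) =
    (((Equiv.Perm.sign σ : ℤ) : ℍ[ℝ]) *
      ((((leaders σ 0).reverse).map
          (cycProd (A.submatrix j.succAbove j.succAbove) σ)).prod *
        cycProd (A.submatrix j.succAbove j.succAbove) σ 0)) * A j j := by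
  set C := A.submatrix j.succAbove j.succAbove with hC
  have hcyc : ∀ y, cycProd A (tau0 j σ) (j.succAbove y) = cycProd C σ y :=
    fun y => cycProd_conj Fin.succAbove_right_injective (iter_diag j σ y)
      (fun t => rfl)
  have h1 : (leaders (tau0 j σ) j).reverse.map (cycProd A (tau0 j σ)) =
      ((leaders σ 0).reverse.map (cycProd C σ)) ++ [cycProd C σ 0] := by
    rw [leaders_diag, ← List.map_reverse, List.map_map, List.reverse_cons,
      List.map_append]
    congr 1
    · exact List.map_congr_left fun y _ => hcyc y
    · simp [hcyc 0]
  rw [h1, List.prod_append, cycProd_j_diag, sign_tau0]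
  simp [mul_assoc]

lemma off_term {n : ℕ} (A : Matrix (Fin (n + 2)) (Fin (n + 2)) ℍ[ℝ])
    (j : Fin (n + 2)) (i' : Fin (n + 1)) (σ : Equiv.Perm (Fin (n + 1))) :
    ((Equiv.Perm.sign (tauE j (j.succAbove i') σ) : ℤ) : ℍ[ℝ]) *
      ((((leaders (tauE j (j.succAbove i') σ) j).reverse).map
          (cycProd A (tauE j (j.succAbove i') σ))).prod *
        cycProd A (tauE j (j.succAbove i') σ) j) =
    (- (((Equiv.Perm.sign σ : ℤ) : ℍ[ℝ]) *
      ((((leaders σ i').reverse).map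
          (cycProd ((A.updateRow (j.succAbove i') fun t => A j t).submatrix
            j.succAbove j.succAbove) σ)).prod *
        cycProd ((A.updateRow (j.succAbove i') fun t => A j t).submatrix
            j.succAbove j.succAbove) σ i'))) * A (j.succAbove i') j := by
  set B := (A.updateRow (j.succAbove i') fun t => A j t).submatrix
    j.succAbove j.succAbove with hB
  have hcyc : ∀ y, ¬ inCycleB σ i' y = true →
      cycProd A (tauE j (j.succAbove i') σ) (j.succAbove y) = cycProd B σ y := by
    intro y hy
    refine cycProd_conj Fin.succAbove_right_injective
      (iter_off j i' σ y (not_inCycle_forall hy)) (fun t => ?_)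
    rw [hB, Matrix.submatrix_apply, Matrix.updateRow_ne]
    intro h
    exact not_inCycle_forall hy t (Fin.succAbove_right_injective h)
  have h1 : (leaders (tauE j (j.succAbove i') σ) j).reverse.map
      (cycProd A (tauE j (j.succAbove i') σ)) =
      (leaders σ i').reverse.map (cycProd B σ) := by
    rw [leaders_off, ← List.map_reverse, List.map_map]
    refine List.map_congr_left fun y hy => ?_
    rw [List.mem_reverse] at hy
    exact hcyc y (mem_leaders_iff.1 hy).2
  rw [h1, cycProd_j_off, sign_tauE j _ σ (Fin.ne_succAbove j i')]
  push_cast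
  simp only [neg_mul, mul_neg, neg_neg, mul_assoc]
  rfl


lemma tauE_bijective {n : ℕ} (j : Fin (n + 2)) :
    Function.Bijective
      (fun p : Fin (n + 2) × Equiv.Perm (Fin (n + 1)) => tauE j p.1 p.2) := by
  rw [Fintype.bijective_iff_injective_and_card]
  constructor
  · rintro ⟨i1, σ1⟩ ⟨i2, σ2⟩ h
    simp only at h
    have hi : i1 = i2 := by
      have h1 : tauE j i2 σ2 i1 = j := by rw [← h]; exact tauE_apply_i j i1 σ1
      have h2 : tauE j i2 σ2 i2 = j := tauE_apply_i j i2 σ2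
      exact (tauE j i2 σ2).injective (h1.trans h2.symm)
    subst hi
    have hσ : tau0 j σ1 = tau0 j σ2 := mul_right_cancel h
    have : σ1 = σ2 := by
      ext y
      have := congrArg (fun ρ : Equiv.Perm (Fin (n + 2)) => ρ (j.succAbove y)) hσ
      simp only [tau0_apply_f] at this
      exact congrArg Fin.val (Fin.succAbove_right_injective this)
    rw [this]
  · rw [Fintype.card_prod, Fintype.card_perm, Fintype.card_perm,
      Fintype.card_fin, Fintype.card_fin]
    simp only [Nat.factorial_succ]

/-- expansion of the `j`-th column determinant along the `j`-th
column by left cofactors.  The matrix has size `n + 2 ≥ 2`.  `L i j` is the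
left `ij`-th cofactor: for `i ≠ j` (i.e. `i = j.succAbove i'`) it is minus the
column determinant, at the position of `i`, of the matrix obtained from `A` by
replacing the `i`-th row with the `j`-th row and deleting the `j`-th row and
column; `L j j` is the column determinant of `A^{jj}` at the position of
`k = min ({1,…,n} \ {j})`, which is position `0` of the submatrix. -/

theorem stmt5 {n : ℕ} (A : Matrix (Fin (n + 2)) (Fin (n + 2)) ℍ[ℝ])
    (L : Fin (n + 2) → Fin (n + 2) → ℍ[ℝ])
    (hLdiag : ∀ j : Fin (n + 2),
      L j j = cdet (A.submatrix j.succAbove j.succAbove) 0)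
    (hLoff : ∀ (j : Fin (n + 2)) (i' : Fin (n + 1)),
      L (j.succAbove i') j =
        - cdet ((A.updateRow (j.succAbove i') fun t => A j t).submatrix
            j.succAbove j.succAbove) i') :
    ∀ j, cdet A j = ∑ i, L i j * A i j := by
  intro j
  have step1 : cdet A j = ∑ p : Fin (n + 2) × Equiv.Perm (Fin (n + 1)),
      ((Equiv.Perm.sign (tauE j p.1 p.2) : ℤ) : ℍ[ℝ]) *
        ((((leaders (tauE j p.1 p.2) j).reverse).map
            (cycProd A (tauE j p.1 p.2))).prod * cycProd A (tauE j p.1 p.2) j) := by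
    unfold cdet
    exact (Fintype.sum_bijective _ (tauE_bijective j) _ _ (fun p => rfl)).symm
  rw [step1, Fintype.sum_prod_type]
  refine Finset.sum_congr rfl fun i _ => ?_
  rcases eq_or_ne i j with rfl | hij
  · have htE : ∀ σ : Equiv.Perm (Fin (n + 1)), tauE i i σ = tau0 i σ := by
      intro σ
      unfold tauE
      rw [Equiv.swap_self]
      exact mul_one _
    have h2 : ∀ σ : Equiv.Perm (Fin (n + 1)),
        ((Equiv.Perm.sign (tauE i i σ) : ℤ) : ℍ[ℝ]) *
          ((((leaders (tauE i i σ) i).reverse).map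
              (cycProd A (tauE i i σ))).prod * cycProd A (tauE i i σ) i) =
        (((Equiv.Perm.sign σ : ℤ) : ℍ[ℝ]) *
          ((((leaders σ 0).reverse).map
              (cycProd (A.submatrix i.succAbove i.succAbove) σ)).prod *
            cycProd (A.submatrix i.succAbove i.succAbove) σ 0)) * A i i := by
      intro σ
      rw [htE]
      exact diag_term A i σ
    rw [Finset.sum_congr rfl fun σ _ => h2 σ, ← Finset.sum_mul, hLdiag i]
    rfl
  · obtain ⟨i', rfl⟩ := Fin.exists_succAbove_eq hij
    rw [Finset.sum_congr rfl fun σ _ => off_term A j i' σ, ← Finset.sum_mul,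
      hLoff j i']
    congr 1
    rw [Finset.sum_neg_distrib]
    rfl
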